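/- Let a ∈ (1/2, 2/3]. Define d_0 = t_1; d_n = min{(t_1+1)/1, …, (t_n+1)/n, t_{n+1}/(n+1)} for integers 1 ≤ n < σ_a; and d_{σ_a} = min{(t_1+1)/1, …, (t_{σ_a}+1)/σ_a} if σ_a < ∞. Then for every x ∈ [0, 1) and all integers n, k with 0 ≤ n ≤ σ_a and 0 ≤ k ≤ σ_a(x), one has d_n ≥ t_1 and t_k(x) ≥ k·d_n − 1{n ≠ 0}. -/

import Mathlib

open MeasureTheory Filter Set ProbabilityTheory
open scoped ENNReal Classical Topology

noncomputable section

/-- The map `T_a` (extended to a total function; on the paper's domain it agrees with `T_a`,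
and `T_{2/3}(1) = 0`). -/
def Tmap (a x : ℝ) : ℝ := if x < 1 then (x + 1) / a else (x - 1) / a

/-- `κ_a(x) ∈ ℕ∞`: the first entry time of the orbit of `x` under `T_a` into the hole
`I_a = ((2a-1)/(1-a), 1)`. -/
def kappa (a x : ℝ) : ℕ∞ :=
  ⨅ (k : ℕ) (_ : (Tmap a)^[k] x ∈ Set.Ioo ((2 * a - 1) / (1 - a)) 1), (k : ℕ∞)

/-- `δ_k(x)` -/
def deltaF (a x : ℝ) (k : ℕ) : ℝ := if (Tmap a)^[k] x < 1 then 1 else 0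

/-- `L_k(x)` -/
def Lnat (a x : ℝ) (k : ℕ) : ℕ :=
  ((Finset.range k).filter fun i => (Tmap a)^[i] x < 1).card

/-- the `k`-th term of the series `∑_{k=0}^{κ_a(x)} δ_k(x) (p/λ)^{k+1} (q/p)^{L_k(x)}` -/
def lamTerm (a p x lam : ℝ) (k : ℕ) : ℝ :=
  if (k : ℕ∞) ≤ kappa a x then
    deltaF a x k * (p / lam) ^ (k + 1) * ((1 - p) / p) ^ (Lnat a x k)
  else 0

/-- `λ` is a positive solution of the equation defining `λ_a`. -/
def IsLamSol (a p lam : ℝ) : Prop := 0 < lam ∧ HasSum (lamTerm a p 0 lam) 1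

/-- `V(x) = ∑_{k=0}^{κ_a} (p/λ_a)^k (q/p)^{L_k} 1{T_a^k(0) ≤ x}` -/
def Vfun (a p lam x : ℝ) : ℝ :=
  ∑' k : ℕ, if (k : ℕ∞) ≤ kappa a 0 ∧ (Tmap a)^[k] 0 ≤ x then
    (p / lam) ^ k * ((1 - p) / p) ^ (Lnat a 0 k) else 0

/-- `F̄_a(y) = ∑_{k=0}^{κ_a(y)} δ_k(y) (p/λ_a)^{k+1} (q/p)^{L_k(y)}`. -/
def Fbar (a p lam y : ℝ) : ℝ := ∑' k, lamTerm a p y lam k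

/-- The set of return times to `[0,1)` of the orbit of `x` under `T_a`. -/
def RetSet (a x : ℝ) : Set ℕ :=
  {n | 1 ≤ n ∧ (n : ℕ∞) ≤ kappa a x ∧ (Tmap a)^[n] x < 1}

/-- `σ_a(x)`: the total number of returns to `[0,1)`. -/
def sigmaRet (a x : ℝ) : ℕ∞ := (RetSet a x).encard

/-- `t_k(x)`: the `k`-th return time to `[0,1)` (`t_0(x) = 0`). -/
def retTime (a x : ℝ) (k : ℕ) : ℕ :=
  if k = 0 then 0 else Nat.nth (· ∈ RetSet a x) (k - 1)

/-- The quantities `d_n` from the key lemma on return times. -/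
def dfun (a : ℝ) (n : ℕ) : ℝ :=
  if n = 0 then (retTime a 0 1 : ℝ)
  else if (n : ℕ∞) < sigmaRet a 0 then
    min (sInf ((fun j : ℕ => ((retTime a 0 j : ℝ) + 1) / (j : ℝ)) '' Set.Icc 1 n))
      ((retTime a 0 (n + 1) : ℝ) / ((n : ℝ) + 1))
  else sInf ((fun j : ℕ => ((retTime a 0 j : ℝ) + 1) / (j : ℝ)) '' Set.Icc 1 n)

namespace RTCaux


/-- validity of index `i` for `Nat.nth p` in terms of `encard`. -/
lemma valid_of_encard {p : ℕ → Prop} {i : ℕ} (h : (i + 1 : ℕ∞) ≤ (setOf p).encard) :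
    ∀ hf : (setOf p).Finite, i < hf.toFinset.card := by
  intro hf
  rw [hf.encard_eq_coe_toFinset_card] at h
  have : (i + 1 : ℕ) ≤ hf.toFinset.card := by exact_mod_cast h
  omega

lemma encard_ge_of_valid {p : ℕ → Prop} {i : ℕ}
    (h : ∀ hf : (setOf p).Finite, i < hf.toFinset.card) :
    (i + 1 : ℕ∞) ≤ (setOf p).encard := by
  rcases (setOf p).finite_or_infinite with hf | hf
  · rw [hf.encard_eq_coe_toFinset_card]
    exact_mod_cast Nat.cast_le.mpr (h hf)
  · rw [Set.encard_eq_top hf]; exact le_top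

lemma shift_nth {p q : ℕ → Prop} {m : ℕ}
    (hm : (m + 1 : ℕ∞) ≤ (setOf p).encard)
    (hq : ∀ s, q s ↔ 1 ≤ s ∧ p (Nat.nth p m + s)) :
    (setOf p).encard = (m + 1 : ℕ∞) + (setOf q).encard ∧
    ∀ i : ℕ, (i + 1 : ℕ∞) ≤ (setOf q).encard →
      Nat.nth p (m + 1 + i) = Nat.nth p m + Nat.nth q i := by
  have hvalid : ∀ l, l ≤ m → ∀ hf : (setOf p).Finite, l < hf.toFinset.card := by
    intro l hl hf; have := valid_of_encard hm hf; omega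
  set j := Nat.nth p m with hj
  -- part A : elements of p below (incl.) j
  have hA : setOf p ∩ Iic j = Nat.nth p '' Iio (m + 1) := by
    ext v
    constructor
    · rintro ⟨hv, hvle⟩
      obtain ⟨l, hl, rfl⟩ := Nat.exists_lt_card_nth_eq (p := p) hv
      refine ⟨l, ?_, rfl⟩
      simp only [mem_Iio]
      by_contra hlm
      push_neg at hlm
      have : j < Nat.nth p l := Nat.nth_lt_nth' (by omega) hl
      simp only [mem_Iic] at hvle; omega
    · rintro ⟨l, hl, rfl⟩
      simp only [mem_Iio] at hl
      exact ⟨Nat.nth_mem l (hvalid l (by omega)), Nat.nth_le_nth' (by omega) (hvalid m le_rfl)⟩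
  have hAcard : (setOf p ∩ Iic j).encard = (m + 1 : ℕ∞) := by
    rw [hA]
    have hinj : InjOn (Nat.nth p) (Iio (m + 1)) := by
      intro l1 h1 l2 h2 he
      simp only [mem_Iio] at h1 h2
      by_contra hne
      rcases Nat.lt_or_ge l1 l2 with h | h
      · exact absurd he (Nat.nth_lt_nth' h (hvalid l2 (by omega))).ne
      · have : l2 < l1 := by omega
        exact absurd he.symm (Nat.nth_lt_nth' this (hvalid l1 (by omega))).ne
    rw [hinj.encard_image]
    have : (Iio (m+1) : Set ℕ) = {i | i < m+1} := rfl
    rw [this, Set.Nat.encard_range]; push_cast; ring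
  -- part B : elements of p above j  are in bijection with q
  have hB : (fun s => j + s) '' setOf q = setOf p ∩ Ioi j := by
    ext v
    constructor
    · rintro ⟨s, hs, rfl⟩
      change q s at hs
      rw [hq] at hs
      simp only [mem_inter_iff, mem_setOf_eq]
      exact ⟨hs.2, by simp only [mem_Ioi]; omega⟩
    · rintro ⟨hv, hvgt⟩
      simp only [mem_Ioi] at hvgt
      change p v at hv
      refine ⟨v - j, ?_, by simp only []; omega⟩
      change q (v - j)
      rw [hq]
      constructor
      · omega
      · have : j + (v - j) = v := by omega
        rw [this]; exact hv
  have hBcard : (setOf p ∩ Ioi j).encard = (setOf q).encard := by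
    rw [← hB, Function.Injective.encard_image (fun s t h => by omega)]
  -- decomposition
  have hsplit : (setOf p).encard = (m + 1 : ℕ∞) + (setOf q).encard := by
    have hdecomp : setOf p = (setOf p ∩ Iic j) ∪ (setOf p ∩ Ioi j) := by
      ext v; simp only [mem_union, mem_inter_iff, mem_Iic, mem_Ioi, mem_setOf_eq]
      constructor
      · intro hv; rcases le_or_gt v j with h | h
        · exact Or.inl ⟨hv, h⟩
        · exact Or.inr ⟨hv, h⟩
      · rintro (⟨hv, _⟩ | ⟨hv, _⟩) <;> exact hv
    rw [hdecomp, Set.encard_union_eq, hAcard, hBcard]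
    exact Set.disjoint_left.mpr (fun v hv hv' => by
      simp only [mem_inter_iff, mem_Iic, mem_Ioi] at hv hv'; omega)
  refine ⟨hsplit, ?_⟩
  -- the nth shift equation, by strong induction
  intro i
  induction i using Nat.strong_induction_on with
  | _ i IH =>
    intro hi
    have hqvalid : ∀ hf : (setOf q).Finite, i < hf.toFinset.card := valid_of_encard hi
    have hpvalid : ∀ hf : (setOf p).Finite, m + 1 + i < hf.toFinset.card := by
      apply valid_of_encard
      rw [hsplit]
      calc ((m + 1 + i : ℕ) + 1 : ℕ∞) = (m + 1 : ℕ∞) + ((i : ℕ∞) + 1) := by push_cast; ring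
        _ ≤ (m + 1 : ℕ∞) + (setOf q).encard := by
            exact add_le_add (le_refl _) (by exact_mod_cast hi)
    have hql : IsLeast {s | q s ∧ ∀ l < i, Nat.nth q l < s} (Nat.nth q i) :=
      Nat.isLeast_nth hqvalid
    have hpl : IsLeast {v | p v ∧ ∀ l < m + 1 + i, Nat.nth p l < v} (Nat.nth p (m + 1 + i)) :=
      Nat.isLeast_nth hpvalid
    have hmem : j + Nat.nth q i ∈ {v | p v ∧ ∀ l < m + 1 + i, Nat.nth p l < v} := by
      have hqi : q (Nat.nth q i) := hql.1.1
      rw [hq] at hqi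
      refine ⟨hqi.2, ?_⟩
      intro l hl
      rcases le_or_gt l m with h | h
      · have : Nat.nth p l ≤ j := Nat.nth_le_nth' h (hvalid m le_rfl)
        omega
      · -- l = m + 1 + l' with l' < i
        have hl' : l - (m+1) < i := by omega
        have : Nat.nth p l = j + Nat.nth q (l - (m+1)) := by
          have hrw : m + 1 + (l - (m+1)) = l := by omega
          have := IH (l - (m+1)) hl' (le_trans (by
            exact_mod_cast Nat.cast_le.mpr (by omega : (l - (m+1)) + 1 ≤ i + 1)) hi)
          rwa [hrw] at this
        have hlt : Nat.nth q (l - (m+1)) < Nat.nth q i := Nat.nth_lt_nth' hl' hqvalid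
        omega
    have hlb : ∀ v ∈ {v | p v ∧ ∀ l < m + 1 + i, Nat.nth p l < v}, j + Nat.nth q i ≤ v := by
      rintro v ⟨hv, hvlt⟩
      have hvj : j < v := hvlt m (by omega)
      set s := v - j with hs
      have hvs : v = j + s := by omega
      have hqs : q s := by rw [hq]; exact ⟨by omega, by rw [← hvs]; exact hv⟩
      have : Nat.nth q i ≤ s := by
        apply hql.2
        refine ⟨hqs, ?_⟩
        intro l hl
        have heq : Nat.nth p (m + 1 + l) = j + Nat.nth q l :=
          IH l hl (le_trans (by exact_mod_cast Nat.cast_le.mpr (by omega : l + 1 ≤ i + 1)) hi)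
        have := hvlt (m + 1 + l) (by omega)
        omega
      omega
    exact (hpl.unique ⟨hmem, hlb⟩)


variable {a : ℝ}

/-- shorthand for the structural hypotheses on `a`. -/
def A (a : ℝ) : Prop := 1/2 < a ∧ a ≤ 2/3

lemma A.apos (h : A a) : 0 < a := by have := h.1; norm_num at this ⊢; linarith
lemma A.alt1 (h : A a) : a < 1 := by have := h.2; linarith [h.1]
lemma A.sub1 (h : A a) : 0 < 1 - a := by linarith [h.alt1]

/-- the left endpoint of the hole. -/
def cpt (a : ℝ) : ℝ := (2 * a - 1) / (1 - a)

lemma A.cpos (h : A a) : 0 < cpt a := by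
  apply div_pos <;> [linarith [h.1]; exact h.sub1]

lemma A.cle1 (h : A a) : cpt a ≤ 1 := by
  rw [cpt, div_le_one h.sub1]; linarith [h.2]

lemma kappa_le_iff (x : ℝ) (n : ℕ) :
    (n : ℕ∞) ≤ kappa a x ↔ ∀ i < n, (Tmap a)^[i] x ∉ Set.Ioo (cpt a) 1 := by
  rw [kappa]
  constructor
  · intro h i hi hmem
    have : (n : ℕ∞) ≤ (i : ℕ∞) := by
      refine le_trans h ?_
      refine iInf_le_of_le i ?_
      have hmem' : (Tmap a)^[i] x ∈ Set.Ioo ((2*a-1)/(1-a)) 1 := hmem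
      exact iInf_le_of_le hmem' le_rfl
    have : n ≤ i := by exact_mod_cast this
    omega
  · intro h
    refine le_iInf fun k => le_iInf fun hk => ?_
    have : ¬ k < n := fun hkn => h k hkn hk
    exact_mod_cast Nat.cast_le.mpr (by omega : n ≤ k)

lemma mem_retset_iff (x : ℝ) (n : ℕ) :
    n ∈ RetSet a x ↔
      1 ≤ n ∧ (∀ i < n, (Tmap a)^[i] x ∉ Set.Ioo (cpt a) 1) ∧ (Tmap a)^[n] x < 1 := by
  rw [RetSet, Set.mem_setOf_eq, kappa_le_iff]

lemma Tmap_lt (x : ℝ) (hx : x < 1) : Tmap a x = (x + 1) / a := if_pos hx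

lemma Tmap_ge (x : ℝ) (hx : 1 ≤ x) : Tmap a x = (x - 1) / a := if_neg (not_lt.mpr hx)

lemma Tmap_nonneg (h : A a) {x : ℝ} (hx : 0 ≤ x) : 0 ≤ Tmap a x := by
  rw [Tmap]
  split_ifs with h1
  · exact div_nonneg (by linarith) h.apos.le
  · push_neg at h1
    exact div_nonneg (by linarith) h.apos.le

lemma orb_nonneg (h : A a) {x : ℝ} (hx : 0 ≤ x) (i : ℕ) : 0 ≤ (Tmap a)^[i] x := by
  induction i with
  | zero => exact hx
  | succ i ih => rw [Function.iterate_succ_apply']; exact Tmap_nonneg h ih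

/-- monotone comparison of two orbits along a joint excursion (Lemma A). -/
lemma lemA (h : A a) {y' y : ℝ} (hy'0 : 0 ≤ y') (hy'y : y' ≤ y) (hy1 : y < 1)
    {r' r : ℕ} (hr'1 : 1 ≤ r') (hr' : (Tmap a)^[r'] y' < 1)
    (hr'min : ∀ i, 1 ≤ i → i < r' → 1 ≤ (Tmap a)^[i] y')
    (hr1 : 1 ≤ r) (hr : (Tmap a)^[r] y < 1)
    (hrmin : ∀ i, 1 ≤ i → i < r → 1 ≤ (Tmap a)^[i] y) :
    r' ≤ r ∧ (r' = r → (Tmap a)^[r'] y' ≤ (Tmap a)^[r] y) := by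
  have hcmp : ∀ i, i ≤ r' → i ≤ r → (Tmap a)^[i] y' ≤ (Tmap a)^[i] y := by
    intro i
    induction i with
    | zero => intro _ _; simpa using hy'y
    | succ i ih =>
      intro h1 h2
      have hih := ih (by omega) (by omega)
      rw [Function.iterate_succ_apply', Function.iterate_succ_apply']
      rcases Nat.eq_zero_or_pos i with rfl | hi
      · simp only [Function.iterate_zero_apply] at hih ⊢
        rw [Tmap_lt y' (lt_of_le_of_lt hy'y hy1), Tmap_lt y hy1,
          div_eq_mul_inv, div_eq_mul_inv]
        exact mul_le_mul_of_nonneg_right (by linarith) (inv_nonneg.mpr h.apos.le)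
      · have h1' : 1 ≤ (Tmap a)^[i] y' := hr'min i hi (by omega)
        have h2' : 1 ≤ (Tmap a)^[i] y := hrmin i hi (by omega)
        rw [Tmap_ge _ h1', Tmap_ge _ h2', div_eq_mul_inv, div_eq_mul_inv]
        exact mul_le_mul_of_nonneg_right (by linarith) (inv_nonneg.mpr h.apos.le)
  constructor
  · by_contra hlt
    push_neg at hlt
    have := hcmp r hlt.le le_rfl
    have := hr'min r hr1 hlt
    linarith
  · intro he
    subst he
    exact hcmp r' le_rfl (by omega)

/-- the orbit of `cpt a` (when `cpt a < 1`) never returns below 1. -/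
lemma cfix (h : A a) (hc1 : cpt a < 1) : ∀ i, 1 ≤ i → (Tmap a)^[i] (cpt a) = 1/(1-a) := by
  have hz1 : (1:ℝ) ≤ 1/(1-a) := by
    rw [le_div_iff₀ h.sub1]; linarith [h.apos]
  intro i hi
  induction i with
  | zero => omega
  | succ i ih =>
    have ha0 : a ≠ 0 := h.apos.ne'
    have h1a : (1:ℝ) - a ≠ 0 := h.sub1.ne'
    rcases Nat.eq_zero_or_pos i with rfl | hipos
    · simp only [zero_add, Function.iterate_one]
      rw [Tmap_lt _ hc1, cpt]
      field_simp
      ring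
    · rw [Function.iterate_succ_apply', ih hipos]
      rw [Tmap_ge _ hz1]
      field_simp
      ring

/-- the escape lemma: points strictly below `cpt a` return below 1. -/
lemma escape (h : A a) {y : ℝ} (hy0 : 0 ≤ y) (hyc : y < cpt a) :
    ∃ r, 1 ≤ r ∧ (Tmap a)^[r] y < 1 := by
  by_contra hcon
  push_neg at hcon
  have hstep : ∀ r, 1 ≤ r → 1 ≤ (Tmap a)^[r] y := fun r hr => hcon r hr
  have hy1 : y < 1 := lt_of_lt_of_le hyc h.cle1
  have hD0 : 0 < (cpt a - y)/a := div_pos (by linarith) h.apos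
  have hbound : ∀ i : ℕ, (Tmap a)^[i+1] y ≤ 1/(1-a) - (a⁻¹)^i * ((cpt a - y)/a) := by
    intro i
    induction i with
    | zero =>
      simp only [zero_add, pow_zero, one_mul, Function.iterate_one]
      rw [Tmap_lt _ hy1, cpt]
      have ha0 : a ≠ 0 := h.apos.ne'
      have h1a : (1:ℝ) - a ≠ 0 := h.sub1.ne'
      apply le_of_eq
      field_simp
      ring
    | succ i ih =>
      have h1 : 1 ≤ (Tmap a)^[i+1] y := hstep (i+1) (by omega)
      rw [Function.iterate_succ_apply', Tmap_ge _ h1]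
      have hstep2 : ((Tmap a)^[i+1] y - 1)/a ≤ (1/(1-a) - (a⁻¹)^i * ((cpt a - y)/a) - 1)/a := by
        rw [div_eq_mul_inv, div_eq_mul_inv]
        exact mul_le_mul_of_nonneg_right (by linarith) (inv_nonneg.mpr h.apos.le)
      refine hstep2.trans ?_
      have ha0 : a ≠ 0 := h.apos.ne'
      have h1a : (1:ℝ) - a ≠ 0 := h.sub1.ne'
      apply le_of_eq
      rw [pow_succ]
      field_simp
      ring
  obtain ⟨i, hi⟩ := pow_unbounded_of_one_lt ((1/(1-a) - 1) / ((cpt a - y)/a))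
    (one_lt_inv₀ h.apos |>.mpr h.alt1)
  have h2 : (1/(1-a) - 1) < (a⁻¹)^i * ((cpt a - y)/a) := by
    rw [div_lt_iff₀ hD0] at hi
    linarith
  have h3 := hbound i
  have h4 := hstep (i+1) (by omega)
  linarith


lemma setof_mem_retset (a x : ℝ) : setOf (· ∈ RetSet a x) = RetSet a x := rfl

lemma retTime_zero (a x : ℝ) : retTime a x 0 = 0 := if_pos rfl

lemma retTime_mem {a x : ℝ} {k : ℕ} (hk : 1 ≤ k) (hσ : (k : ℕ∞) ≤ sigmaRet a x) :
    retTime a x k ∈ RetSet a x := by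
  rw [retTime, if_neg (by omega)]
  refine Nat.nth_mem (k-1) (valid_of_encard ?_)
  rw [setof_mem_retset]
  have : ((k-1 : ℕ) : ℕ∞) + 1 = (k : ℕ∞) := by
    obtain ⟨m, rfl⟩ : ∃ m, k = m + 1 := ⟨k-1, by omega⟩
    simp
  rw [this]; exact hσ

lemma ret_lt_one {a x : ℝ} {k : ℕ} (hk : 1 ≤ k) (hσ : (k : ℕ∞) ≤ sigmaRet a x) :
    (Tmap a)^[retTime a x k] x < 1 :=
  ((mem_retset_iff x _).mp (retTime_mem hk hσ)).2.2

lemma cast_add_le_add_iff (M i : ℕ) (e : ℕ∞) :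
    ((M + i : ℕ) : ℕ∞) ≤ (M : ℕ∞) + e ↔ (i : ℕ∞) ≤ e := by
  rw [Nat.cast_add]
  exact WithTop.add_le_add_iff_left (WithTop.coe_ne_top)

lemma enat_cancel {s : ℕ} {e : ℕ∞} (h : (s : ℕ∞) + e = (s : ℕ∞)) : e = 0 := by
  have h1 : (s : ℕ∞) + e ≤ (s : ℕ∞) + 0 := by rw [add_zero]; exact h.le
  have := (WithTop.add_le_add_iff_left (WithTop.coe_ne_top (a := s))).mp h1
  exact le_antisymm this zero_le

/-- The key shift lemma at the level of `retTime` / `sigmaRet`. -/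
lemma shift_main (a x : ℝ) {M : ℕ} (hM : (M : ℕ∞) ≤ sigmaRet a x) :
    sigmaRet a x = (M : ℕ∞) + sigmaRet a ((Tmap a)^[retTime a x M] x) ∧
    ∀ i : ℕ, 1 ≤ i → ((i : ℕ∞) ≤ sigmaRet a ((Tmap a)^[retTime a x M] x)) →
      retTime a x (M + i) = retTime a x M + retTime a ((Tmap a)^[retTime a x M] x) i := by
  rcases Nat.eq_zero_or_pos M with rfl | hM1
  · rw [retTime_zero]
    simp only [Function.iterate_zero_apply, Nat.cast_zero, zero_add]
    exact ⟨trivial, fun i _ _ => trivial⟩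
  · obtain ⟨m, rfl⟩ : ∃ m, M = m + 1 := ⟨M-1, by omega⟩
    set j := retTime a x (m+1) with hjdef
    have hjmem : j ∈ RetSet a x := retTime_mem (by omega) hM
    set y := (Tmap a)^[j] x with hydef
    have hjnth : Nat.nth (· ∈ RetSet a x) m = j := by
      rw [hjdef, retTime, if_neg (by omega)]
      norm_num
    have hq : ∀ s, (s ∈ RetSet a y) ↔ 1 ≤ s ∧ (j + s) ∈ RetSet a x := by
      intro s
      rw [mem_retset_iff, mem_retset_iff]
      obtain ⟨-, hjnohole, -⟩ := (mem_retset_iff x j).mp hjmem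
      have horb : ∀ l : ℕ, (Tmap a)^[l] y = (Tmap a)^[l + j] x := by
        intro l; rw [hydef, ← Function.iterate_add_apply]
      constructor
      · rintro ⟨hs1, hsnohole, hslt⟩
        refine ⟨hs1, ⟨by omega, ?_, ?_⟩⟩
        · intro i hi
          rcases lt_or_ge i j with hij | hij
          · exact hjnohole i hij
          · have : i - j + j = i := by omega
            rw [← this, ← horb]
            exact hsnohole (i - j) (by omega)
        · have : s + j = j + s := by omega
          rw [← this, ← horb]
          exact hslt
      · rintro ⟨hs1, -, hnohole, hlt⟩
        refine ⟨hs1, ?_, ?_⟩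
        · intro i hi
          rw [horb]
          exact hnohole (i + j) (by omega)
        · rw [horb]
          have : s + j = j + s := by omega
          rw [this]
          exact hlt
    have hq' : ∀ s, (s ∈ RetSet a y) ↔ 1 ≤ s ∧ ((Nat.nth (· ∈ RetSet a x) m) + s) ∈ RetSet a x := by
      intro s; rw [hjnth]; exact hq s
    have hm' : ((m : ℕ∞) + 1) ≤ (setOf (· ∈ RetSet a x)).encard := by
      rw [setof_mem_retset]
      have : ((m : ℕ∞) + 1) = ((m+1 : ℕ) : ℕ∞) := by push_cast; ring
      rw [this]; exact hM
    obtain ⟨hcard, hnth⟩ := shift_nth hm' hq'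
    constructor
    · have h2 : ((m+1:ℕ) : ℕ∞) = (m:ℕ∞) + 1 := by norm_cast
      rw [h2]
      exact hcard
    · intro i hi1 hiv
      obtain ⟨i', rfl⟩ : ∃ i', i = i' + 1 := ⟨i-1, by omega⟩
      have hval : ((i' : ℕ∞) + 1) ≤ (setOf (· ∈ RetSet a y)).encard := by
        rw [setof_mem_retset]
        have : ((i' : ℕ∞) + 1) = ((i'+1 : ℕ) : ℕ∞) := by push_cast; ring
        rw [this]; exact hiv
      have := hnth i' hval
      rw [hjnth] at this
      rw [retTime, if_neg (by omega), retTime, if_neg (by omega)]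
      have hidx : m + 1 + (i' + 1) - 1 = m + 1 + i' := by omega
      have hidx2 : i' + 1 - 1 = i' := by omega
      rw [hidx, hidx2]
      exact this

/-- first-return properties. -/
lemma rho_spec {a y : ℝ} (hv : (1 : ℕ∞) ≤ sigmaRet a y) :
    1 ≤ retTime a y 1 ∧ (Tmap a)^[retTime a y 1] y < 1 ∧
      ∀ i, 1 ≤ i → i < retTime a y 1 → 1 ≤ (Tmap a)^[i] y := by
  have hmem := retTime_mem (le_refl 1) hv
  obtain ⟨h1, hnohole, hlt⟩ := (mem_retset_iff y _).mp hmem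
  refine ⟨h1, hlt, ?_⟩
  intro i hi1 hir
  by_contra hcon
  push_neg at hcon
  have himem : i ∈ RetSet a y := by
    rw [mem_retset_iff]
    exact ⟨hi1, fun l hl => hnohole l (by omega), hcon⟩
  have : retTime a y 1 ≤ i := by
    rw [retTime, if_neg (by omega)]
    simp only [Nat.sub_self]
    rw [Nat.nth_zero]
    exact Nat.sInf_le himem
  omega


lemma P0 (h : A a) : ∀ k : ℕ, ∀ x : ℝ, 0 ≤ x → x < 1 → (k : ℕ∞) ≤ sigmaRet a x →
    k * retTime a 0 1 ≤ retTime a x k := by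
  intro k
  induction k with
  | zero => intro x _ _ _; simp [retTime_zero]
  | succ k IH =>
    intro x hx0 hx1 hσ
    have h1σ : (1 : ℕ∞) ≤ sigmaRet a x :=
      le_trans (by exact_mod_cast Nat.cast_le.mpr (by omega : 1 ≤ k+1)) hσ
    by_cases h0 : (1 : ℕ∞) ≤ sigmaRet a (0:ℝ)
    · obtain ⟨hrx1, hrxlt, hrxmin⟩ := rho_spec h1σ
      obtain ⟨hr01, hr0lt, hr0min⟩ := rho_spec h0
      have ht1r : retTime a (0:ℝ) 1 ≤ retTime a x 1 :=
        (lemA h le_rfl hx0 hx1 hr01 hr0lt hr0min hrx1 hrxlt hrxmin).1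
      obtain ⟨hcard, hshift⟩ := shift_main a x (M := 1) h1σ
      set y := (Tmap a)^[retTime a x 1] x with hy
      have hy0 : 0 ≤ y := orb_nonneg h hx0 _
      have hy1 : y < 1 := ret_lt_one le_rfl h1σ
      rcases Nat.eq_zero_or_pos k with rfl | hk
      · simpa using ht1r
      · have h' : ((1 + k : ℕ) : ℕ∞) ≤ sigmaRet a x := by rw [Nat.add_comm]; exact hσ
        rw [hcard] at h'
        have hσy : (k : ℕ∞) ≤ sigmaRet a y := (cast_add_le_add_iff 1 k _).mp h'
        have heq : retTime a x (1 + k) = retTime a x 1 + retTime a y k := hshift k hk hσy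
        have hIH := IH y hy0 hy1 hσy
        have : k + 1 = 1 + k := by omega
        rw [this, heq]
        calc (1 + k) * retTime a (0:ℝ) 1
            = retTime a (0:ℝ) 1 + k * retTime a (0:ℝ) 1 := by ring
          _ ≤ retTime a x 1 + retTime a y k := Nat.add_le_add ht1r hIH
    · have hσ0 : sigmaRet a (0:ℝ) = 0 := by
        by_contra hne
        exact h0 (ENat.one_le_iff_ne_zero.mpr hne)
      have hempty : RetSet a (0:ℝ) = ∅ := Set.encard_eq_zero.mp hσ0
      have hfin : (setOf (· ∈ RetSet a (0:ℝ))).Finite := by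
        rw [setof_mem_retset, hempty]; exact Set.finite_empty
      have hcard0 : hfin.toFinset.card = 0 := by
        simp only [Finset.card_eq_zero, Set.Finite.toFinset_eq_empty]
        rw [setof_mem_retset, hempty]
      have ht10 : retTime a (0:ℝ) 1 = 0 := by
        rw [retTime, if_neg one_ne_zero]
        exact Nat.nth_of_card_le hfin (hcard0.trans_le (Nat.zero_le _))
      simp [ht10]

lemma dom (h : A a) {x : ℝ} (hx0 : 0 ≤ x) (hx1 : x < 1) :
    ∀ i : ℕ, (i : ℕ∞) ≤ sigmaRet a x → (i : ℕ∞) ≤ sigmaRet a (0:ℝ) →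
    (∀ l, l ≤ i → retTime a x l = retTime a (0:ℝ) l) →
    (Tmap a)^[retTime a (0:ℝ) i] (0:ℝ) ≤ (Tmap a)^[retTime a x i] x := by
  intro i
  induction i with
  | zero => intro _ _ _; rw [retTime_zero, retTime_zero]; simpa using hx0
  | succ i IH =>
    intro hσx hσ0 hsync
    have hix : (i : ℕ∞) ≤ sigmaRet a x :=
      le_trans (Nat.cast_le.mpr (by omega)) hσx
    have hi0 : (i : ℕ∞) ≤ sigmaRet a (0:ℝ) :=
      le_trans (Nat.cast_le.mpr (by omega)) hσ0
    have hU := IH hix hi0 (fun l hl => hsync l (by omega))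
    obtain ⟨hcx, hsx⟩ := shift_main a x (M := i) hix
    obtain ⟨hc0, hs0⟩ := shift_main a (0:ℝ) (M := i) hi0
    set Y := (Tmap a)^[retTime a x i] x with hYdef
    set U := (Tmap a)^[retTime a (0:ℝ) i] (0:ℝ) with hUdef
    have hY1 : Y < 1 := by
      rcases Nat.eq_zero_or_pos i with rfl | hi1
      · rw [hYdef, retTime_zero]; simpa using hx1
      · exact ret_lt_one hi1 hix
    have hU0 : 0 ≤ U := orb_nonneg h le_rfl _
    have hσY : (1 : ℕ∞) ≤ sigmaRet a Y := by
      have h' : ((i + 1 : ℕ) : ℕ∞) ≤ sigmaRet a x := hσx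
      rw [hcx] at h'
      exact (cast_add_le_add_iff i 1 _).mp h'
    have hσU : (1 : ℕ∞) ≤ sigmaRet a U := by
      have h' : ((i + 1 : ℕ) : ℕ∞) ≤ sigmaRet a (0:ℝ) := hσ0
      rw [hc0] at h'
      exact (cast_add_le_add_iff i 1 _).mp h'
    have heqx : retTime a x (i+1) = retTime a x i + retTime a Y 1 := hsx 1 le_rfl hσY
    have heq0 : retTime a (0:ℝ) (i+1) = retTime a (0:ℝ) i + retTime a U 1 := hs0 1 le_rfl hσU
    have hr : retTime a U 1 = retTime a Y 1 := by
      have h1 := hsync (i+1) le_rfl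
      have h2 := hsync i (by omega)
      omega
    obtain ⟨hrY1, hrYlt, hrYmin⟩ := rho_spec hσY
    obtain ⟨hrU1, hrUlt, hrUmin⟩ := rho_spec hσU
    have hcomp := (lemA h hU0 hU hY1 hrU1 hrUlt hrUmin hrY1 hrYlt hrYmin).2 hr
    have e1 : (Tmap a)^[retTime a x (i+1)] x = (Tmap a)^[retTime a Y 1] Y := by
      rw [heqx, Nat.add_comm, Function.iterate_add_apply]
    have e0 : (Tmap a)^[retTime a (0:ℝ) (i+1)] (0:ℝ) = (Tmap a)^[retTime a U 1] U := by
      rw [heq0, Nat.add_comm, Function.iterate_add_apply]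
    rw [e1, e0, hr]
    rw [hr] at hcomp
    exact hcomp


lemma main (h : A a) {n : ℕ} (hn1 : 1 ≤ n) (hnσ : (n : ℕ∞) ≤ sigmaRet a (0:ℝ)) {d : ℝ}
    (hd1 : ∀ j : ℕ, 1 ≤ j → j ≤ n → (j : ℝ) * d ≤ (retTime a (0:ℝ) j : ℝ) + 1)
    (hd2 : (n : ℕ∞) < sigmaRet a (0:ℝ) → ((n : ℝ) + 1) * d ≤ (retTime a (0:ℝ) (n+1) : ℝ)) :
    ∀ k : ℕ, ∀ x : ℝ, 0 ≤ x → x < 1 → (k : ℕ∞) ≤ sigmaRet a x →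
      (k : ℝ) * d - 1 ≤ (retTime a x k : ℝ) := by
  intro k
  induction k using Nat.strong_induction_on with
  | _ k IH =>
  intro x hx0 hx1 hσx
  rcases Nat.eq_zero_or_pos k with rfl | hk1
  · rw [retTime_zero]; norm_num
  -- bound along the orbit of 0
  have H0 : ∀ m : ℕ, 1 ≤ m → m ≤ k → (m : ℕ∞) ≤ sigmaRet a (0:ℝ) →
      (m : ℝ) * d - 1 ≤ (retTime a (0:ℝ) m : ℝ) := by
    intro m hm1 hmk hmσ
    rcases le_or_gt m n with hmn | hmn
    · have := hd1 m hm1 hmn; linarith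
    rcases eq_or_lt_of_le (by omega : n + 1 ≤ m) with heq | hlt
    · have hnlt : (n : ℕ∞) < sigmaRet a (0:ℝ) := by
        refine lt_of_lt_of_le ?_ (le_trans (Nat.cast_le.mpr heq.le) hmσ)
        exact_mod_cast Nat.lt_succ_self n
      have hj := hd2 hnlt
      rw [← heq]
      push_cast
      push_cast at hj
      linarith
    · have hn1σ : ((n + 1 : ℕ) : ℕ∞) ≤ sigmaRet a (0:ℝ) :=
        le_trans (Nat.cast_le.mpr (by omega)) hmσ
      have hnlt : (n : ℕ∞) < sigmaRet a (0:ℝ) := by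
        refine lt_of_lt_of_le ?_ hn1σ
        exact_mod_cast Nat.lt_succ_self n
      obtain ⟨hc0, hs0⟩ := shift_main a (0:ℝ) (M := n+1) hn1σ
      set Y := (Tmap a)^[retTime a (0:ℝ) (n+1)] (0:ℝ) with hYdef
      obtain ⟨i, hi⟩ : ∃ i, m = (n+1) + (i+1) := ⟨m - n - 2, by omega⟩
      have hmσ' : (((n+1) + (i+1) : ℕ) : ℕ∞) ≤ sigmaRet a (0:ℝ) := by rw [← hi]; exact hmσ
      rw [hc0] at hmσ'
      have hσY : ((i + 1 : ℕ) : ℕ∞) ≤ sigmaRet a Y := (cast_add_le_add_iff _ _ _).mp hmσ'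
      have heq2 : retTime a (0:ℝ) m = retTime a (0:ℝ) (n+1) + retTime a Y (i+1) := by
        rw [hi]; exact hs0 (i+1) (by omega) hσY
      have hY0 : 0 ≤ Y := orb_nonneg h le_rfl _
      have hY1 : Y < 1 := ret_lt_one (by omega) hn1σ
      have hrec := IH (i+1) (by omega) Y hY0 hY1 hσY
      have hj := hd2 hnlt
      rw [heq2, hi]
      push_cast
      push_cast at hrec hj
      linarith
  -- the sync length
  set S : ℕ → Prop := fun m => m ≤ k ∧ (m : ℕ∞) ≤ sigmaRet a (0:ℝ) ∧
    ∀ l, l ≤ m → retTime a x l = retTime a (0:ℝ) l with hSdef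
  have hS0 : S 0 := by
    refine ⟨Nat.zero_le _, by simp, fun l hl => ?_⟩
    rw [Nat.le_zero] at hl
    subst hl
    rw [retTime_zero, retTime_zero]
  set m0 := Nat.findGreatest S k with hm0def
  have hm0S : S m0 := Nat.findGreatest_spec (Nat.zero_le k) hS0
  obtain ⟨hm0k, hm0σ, hm0sync⟩ := hm0S
  have hσxm0 : (m0 : ℕ∞) ≤ sigmaRet a x := le_trans (Nat.cast_le.mpr hm0k) hσx
  rcases eq_or_lt_of_le hm0k with heqk | hm0lt
  · -- full sync up to k
    have hsk : retTime a x k = retTime a (0:ℝ) k := hm0sync k (le_of_eq heqk.symm)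
    have := H0 k hk1 le_rfl (by rw [← heqk]; exact hm0σ)
    rw [hsk]; exact this
  · -- partial sync; let m = m0 + 1
    have hmk : m0 + 1 ≤ k := by omega
    have hmσx : ((m0 + 1 : ℕ) : ℕ∞) ≤ sigmaRet a x := le_trans (Nat.cast_le.mpr hmk) hσx
    obtain ⟨hcx, hsx⟩ := shift_main a x (M := m0) hσxm0
    set Y := (Tmap a)^[retTime a x m0] x with hYdef
    have hY0 : 0 ≤ Y := orb_nonneg h hx0 _
    have hY1 : Y < 1 := by
      rcases Nat.eq_zero_or_pos m0 with hm00 | hm01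
      · rw [hYdef, hm00, retTime_zero]; simpa using hx1
      · exact ret_lt_one hm01 hσxm0
    have hσY : (1 : ℕ∞) ≤ sigmaRet a Y := by
      have h' := hmσx
      rw [hcx] at h'
      exact (cast_add_le_add_iff m0 1 _).mp h'
    obtain ⟨hrY1, hrYlt, hrYmin⟩ := rho_spec hσY
    set U := (Tmap a)^[retTime a (0:ℝ) m0] (0:ℝ) with hUdef
    have hU0 : 0 ≤ U := orb_nonneg h le_rfl _
    have hUY : U ≤ Y := dom h hx0 hx1 m0 hσxm0 hm0σ hm0sync
    by_cases hmσ0 : ((m0 + 1 : ℕ) : ℕ∞) ≤ sigmaRet a (0:ℝ)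
    · -- desync case
      obtain ⟨hc0, hs0⟩ := shift_main a (0:ℝ) (M := m0) hm0σ
      have hσU : (1 : ℕ∞) ≤ sigmaRet a U := by
        have h' := hmσ0
        rw [hc0] at h'
        exact (cast_add_le_add_iff m0 1 _).mp h'
      obtain ⟨hrU1, hrUlt, hrUmin⟩ := rho_spec hσU
      have hle := (lemA h hU0 hUY hY1 hrU1 hrUlt hrUmin hrY1 hrYlt hrYmin).1
      have heqx : retTime a x (m0+1) = retTime a x m0 + retTime a Y 1 := hsx 1 le_rfl hσY
      have heq0 : retTime a (0:ℝ) (m0+1) = retTime a (0:ℝ) m0 + retTime a U 1 :=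
        hs0 1 le_rfl hσU
      have hnotS : ¬ S (m0+1) := Nat.findGreatest_is_greatest (by omega) hmk
      have hfail : retTime a x (m0+1) ≠ retTime a (0:ℝ) (m0+1) := by
        intro hcontra
        apply hnotS
        refine ⟨hmk, hmσ0, fun l hl => ?_⟩
        rcases Nat.lt_or_ge l (m0+1) with hl' | hl'
        · exact hm0sync l (by omega)
        · have hleq : l = m0 + 1 := by omega
          rw [hleq]; exact hcontra
      have hsync0 : retTime a x m0 = retTime a (0:ℝ) m0 := hm0sync m0 le_rfl
      have hgap : retTime a (0:ℝ) (m0+1) + 1 ≤ retTime a x (m0+1) := by omega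
      have hH0m := H0 (m0+1) (by omega) hmk hmσ0
      have hmx : ((m0 + 1 : ℕ) : ℝ) * d ≤ (retTime a x (m0+1) : ℝ) := by
        have hcast : ((retTime a (0:ℝ) (m0+1) : ℕ) : ℝ) + 1 ≤ ((retTime a x (m0+1) : ℕ) : ℝ) := by
          exact_mod_cast hgap
        push_cast at hH0m hcast ⊢
        linarith
      rcases eq_or_lt_of_le hmk with heqmk | hmlt
      · rw [← heqmk]
        push_cast at hmx ⊢
        linarith
      · obtain ⟨hcm, hsm⟩ := shift_main a x (M := m0+1) hmσx
        set Z := (Tmap a)^[retTime a x (m0+1)] x with hZdef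
        obtain ⟨i, hik⟩ : ∃ i, k = (m0+1) + (i+1) := ⟨k - m0 - 2, by omega⟩
        have hσx' : (((m0+1) + (i+1) : ℕ) : ℕ∞) ≤ sigmaRet a x := by rw [← hik]; exact hσx
        rw [hcm] at hσx'
        have hσZ : ((i + 1 : ℕ) : ℕ∞) ≤ sigmaRet a Z := (cast_add_le_add_iff _ _ _).mp hσx'
        have heqk2 : retTime a x k = retTime a x (m0+1) + retTime a Z (i+1) := by
          rw [hik]; exact hsm (i+1) (by omega) hσZ
        have hZ0 : 0 ≤ Z := orb_nonneg h hx0 _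
        have hZ1 : Z < 1 := ret_lt_one (by omega) hmσx
        have hrec := IH (i+1) (by omega) Z hZ0 hZ1 hσZ
        rw [heqk2, hik]
        push_cast
        push_cast at hrec hmx
        linarith
    · -- death case : contradiction
      exfalso
      have h1 := not_le.mp hmσ0
      have h1' : sigmaRet a (0:ℝ) < (m0 : ℕ∞) + 1 := by
        have hcst : ((m0 + 1 : ℕ) : ℕ∞) = (m0 : ℕ∞) + 1 := by push_cast; rfl
        rw [← hcst]; exact h1
      have hσ0eq : sigmaRet a (0:ℝ) = (m0 : ℕ∞) :=
        le_antisymm ((ENat.lt_add_one_iff (ENat.coe_ne_top m0)).mp h1') hm0σ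
      obtain ⟨hc0, -⟩ := shift_main a (0:ℝ) (M := m0) hm0σ
      have hm0top : ((m0 : ℕ) : ℕ∞) + sigmaRet a U = ((m0 : ℕ) : ℕ∞) := by
        rw [← hc0]
        exact hσ0eq
      have hσU : sigmaRet a U = 0 := enat_cancel hm0top
      have hretU : RetSet a U = ∅ := Set.encard_eq_zero.mp hσU
      have hYmem := retTime_mem le_rfl hσY
      have hYnohole : Y ∉ Set.Ioo (cpt a) 1 := by
        obtain ⟨h1', hnh, -⟩ := (mem_retset_iff Y _).mp hYmem
        have h0nh := hnh 0 (by omega)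
        simpa using h0nh
      rcases lt_or_ge U (cpt a) with hUc | hUc
      · obtain ⟨r0, hr01, hr0lt⟩ := escape h hU0 hUc
        have hEx : ∃ r, 1 ≤ r ∧ (Tmap a)^[r] U < 1 := ⟨r0, hr01, hr0lt⟩
        obtain ⟨hr11, hr1lt⟩ := Nat.find_spec hEx
        have hr1mem : Nat.find hEx ∈ RetSet a U := by
          rw [mem_retset_iff]
          refine ⟨hr11, ?_, hr1lt⟩
          intro i hi
          rcases Nat.eq_zero_or_pos i with rfl | hi1
          · simp only [Function.iterate_zero_apply]
            intro hmem
            exact absurd hmem.1 (not_lt.mpr hUc.le)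
          · have hmin : ¬ (1 ≤ i ∧ (Tmap a)^[i] U < 1) := Nat.find_min hEx hi
            push_neg at hmin
            have h2 := hmin hi1
            intro hmem
            exact absurd hmem.2 (not_lt.mpr h2)
        rw [hretU] at hr1mem
        exact Set.notMem_empty _ hr1mem
      · have hYc : Y = cpt a := by
          have hcY : cpt a ≤ Y := le_trans hUc hUY
          rcases eq_or_lt_of_le hcY with he | hlt2
          · exact he.symm
          · exact absurd ⟨hlt2, hY1⟩ hYnohole
        obtain ⟨rY, hrYeq⟩ : ∃ r, r = retTime a Y 1 := ⟨_, rfl⟩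
        rw [← hrYeq] at hrY1 hrYlt
        rw [hYc] at hrYlt
        have hfix := cfix h (by rw [← hYc]; exact hY1) rY hrY1
        rw [hfix] at hrYlt
        have hz1 : (1:ℝ) ≤ 1/(1-a) := by
          rw [le_div_iff₀ h.sub1]; linarith [h.apos]
        linarith

end RTCaux

theorem return_time_comparison
    (a : ℝ) (ha : a ∈ Set.Ioc (1/2 : ℝ) (2/3)) :
    ∀ x ∈ Set.Ico (0 : ℝ) 1, ∀ n k : ℕ,
      (n : ℕ∞) ≤ sigmaRet a 0 → (k : ℕ∞) ≤ sigmaRet a x →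
      (retTime a 0 1 : ℝ) ≤ dfun a n ∧
      (retTime a x k : ℝ) ≥ (k : ℝ) * dfun a n - (if n ≠ 0 then 1 else 0) := by
  have h : RTCaux.A a := ⟨ha.1, ha.2⟩
  intro x hx n k hn hk
  obtain ⟨hx0, hx1⟩ := hx
  rcases Nat.eq_zero_or_pos n with rfl | hn1
  · refine ⟨by rw [dfun, if_pos rfl], ?_⟩
    rw [if_neg (by simp : ¬ (0:ℕ) ≠ 0), dfun, if_pos rfl]
    have hP := RTCaux.P0 h k x hx0 hx1 hk
    have hPc : ((k * retTime a 0 1 : ℕ) : ℝ) ≤ ((retTime a x k : ℕ) : ℝ) := by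
      exact_mod_cast hP
    push_cast at hPc
    linarith
  · -- n ≥ 1
    set E := (fun j : ℕ => ((retTime a 0 j : ℝ) + 1) / (j : ℝ)) '' Set.Icc 1 n with hEdef
    have hne : E.Nonempty := ⟨_, ⟨1, ⟨le_rfl, hn1⟩, rfl⟩⟩
    have hbdd : BddBelow E := by
      refine ⟨0, fun v hv => ?_⟩
      obtain ⟨j, hj, rfl⟩ := hv
      positivity
    have hlb : ∀ v ∈ E, (retTime a 0 1 : ℝ) ≤ v := by
      rintro v ⟨j, ⟨hj1, hjn⟩, rfl⟩
      have hjσ : (j : ℕ∞) ≤ sigmaRet a 0 := le_trans (Nat.cast_le.mpr hjn) hn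
      have hP := RTCaux.P0 h j 0 le_rfl (by norm_num) hjσ
      have hPc : ((j * retTime a 0 1 : ℕ) : ℝ) ≤ ((retTime a 0 j : ℕ) : ℝ) := by
        exact_mod_cast hP
      push_cast at hPc
      have hjpos : (0:ℝ) < (j:ℝ) := by exact_mod_cast hj1
      rw [le_div_iff₀ hjpos]
      nlinarith
    have hsInf_ge : (retTime a 0 1 : ℝ) ≤ sInf E := le_csInf hne hlb
    have hd_le_inf : dfun a n ≤ sInf E := by
      rw [dfun, if_neg (by omega : ¬ n = 0), ← hEdef]
      split_ifs with hσ
      · exact min_le_left _ _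
      · exact le_rfl
    have hn1σ : (n : ℕ∞) < sigmaRet a 0 → ((n + 1 : ℕ) : ℕ∞) ≤ sigmaRet a 0 := by
      intro hσ
      have hcst : ((n + 1 : ℕ) : ℕ∞) = (n : ℕ∞) + 1 := by push_cast; rfl
      rw [hcst]
      exact (ENat.add_one_le_iff (ENat.coe_ne_top n)).mpr hσ
    have hd_ge : (retTime a 0 1 : ℝ) ≤ dfun a n := by
      rw [dfun, if_neg (by omega : ¬ n = 0), ← hEdef]
      split_ifs with hσ
      · refine le_min hsInf_ge ?_
        have hP := RTCaux.P0 h (n+1) 0 le_rfl (by norm_num) (hn1σ hσ)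
        have hPc : (((n+1) * retTime a 0 1 : ℕ) : ℝ) ≤ ((retTime a 0 (n+1) : ℕ) : ℝ) := by
          exact_mod_cast hP
        push_cast at hPc
        have hpos : (0:ℝ) < (n:ℝ) + 1 := by positivity
        rw [le_div_iff₀ hpos]
        nlinarith
      · exact hsInf_ge
    refine ⟨hd_ge, ?_⟩
    have hd1 : ∀ j : ℕ, 1 ≤ j → j ≤ n →
        (j : ℝ) * dfun a n ≤ (retTime a (0:ℝ) j : ℝ) + 1 := by
      intro j hj1 hjn
      have hmem : ((retTime a 0 j : ℝ) + 1) / (j : ℝ) ∈ E := ⟨j, ⟨hj1, hjn⟩, rfl⟩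
      have h1 : dfun a n ≤ ((retTime a 0 j : ℝ) + 1) / (j : ℝ) :=
        le_trans hd_le_inf (csInf_le hbdd hmem)
      have hjpos : (0:ℝ) < (j:ℝ) := by exact_mod_cast hj1
      rw [le_div_iff₀ hjpos] at h1
      nlinarith
    have hd2 : (n : ℕ∞) < sigmaRet a (0:ℝ) →
        ((n : ℝ) + 1) * dfun a n ≤ (retTime a (0:ℝ) (n+1) : ℝ) := by
      intro hσ
      have h1 : dfun a n ≤ (retTime a 0 (n + 1) : ℝ) / ((n : ℝ) + 1) := by
        rw [dfun, if_neg (by omega : ¬ n = 0), if_pos hσ]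
        exact min_le_right _ _
      have hpos : (0:ℝ) < (n:ℝ) + 1 := by positivity
      rw [le_div_iff₀ hpos] at h1
      nlinarith
    have hm := RTCaux.main h hn1 hn hd1 hd2 k x hx0 hx1 hk
    rw [if_pos (by omega : n ≠ 0)]
    exact hm

end
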